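/- arXiv:2410.18818 — 5 statements merged into one kernel-verified Lean document; each statement's English description precedes it below -/
import Mathlib

section
/- For every real s with 0 < s < 1, setting b = 2·√(1/s² − 1), one has (b²/(2π)) · ∫₀¹ (2s − 2/(1 + u²b²/4)) · √(1−u²) du = 2 − s − 1/s. -/
open MeasureTheory

/-- For `0 < s < 1` and `b = 2√(1/s² − 1)`,
`(b²/(2π)) ∫₀¹ (2s − 2/(1 + u²b²/4)) √(1−u²) du = 2 − s − 1/s`. -/
theorem statement4 (s : ℝ) (hs0 : 0 < s) (hs1 : s < 1) (b : ℝ)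
    (hb : b = 2 * Real.sqrt (1 / s ^ 2 - 1)) :
    b ^ 2 / (2 * Real.pi) *
        ∫ u in (0:ℝ)..1, (2 * s - 2 / (1 + u ^ 2 * b ^ 2 / 4)) * Real.sqrt (1 - u ^ 2)
      = 2 - s - 1 / s := by
  have hsne : s ≠ 0 := hs0.ne'
  set t : ℝ := 1 / s ^ 2 - 1 with ht_def
  clear_value t
  have ht : 0 < t := by
    have hs2 : s ^ 2 < 1 := by nlinarith
    have h1 : 1 < 1 / s ^ 2 := by
      rw [lt_div_iff₀ (by positivity)]; linarith
    rw [ht_def]; linarith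
  have htne : t ≠ 0 := ht.ne'
  have hinv : s ^ 2 * (1 + t) = 1 := by rw [ht_def]; field_simp; ring
  have hb2 : b ^ 2 = 4 * t := by
    rw [hb, mul_pow, Real.sq_sqrt ht.le]; ring
  have hBpos : ∀ u : ℝ, 0 < Real.sqrt (1 + t * u ^ 2) := by
    intro u; apply Real.sqrt_pos.2; positivity
  -- the antiderivative
  set F : ℝ → ℝ := fun u =>
    s * (Real.arcsin u + u * Real.sqrt (1 - u ^ 2)) + (2 / t) * Real.arcsin u
      - (2 / (s * t)) * Real.arcsin (u / (s * Real.sqrt (1 + t * u ^ 2))) with hF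
  have key : ∀ u ∈ Set.Ioo (0:ℝ) 1,
      HasDerivAt F ((2 * s - 2 / (1 + t * u ^ 2)) * Real.sqrt (1 - u ^ 2)) u := by
    intro u hu
    obtain ⟨hu0, hu1⟩ := hu
    have h1u : (0:ℝ) < 1 - u ^ 2 := by nlinarith
    have hA : Real.sqrt (1 - u ^ 2) ^ 2 = 1 - u ^ 2 := Real.sq_sqrt h1u.le
    have hApos : 0 < Real.sqrt (1 - u ^ 2) := Real.sqrt_pos.2 h1u
    have hAne := hApos.ne'
    have htu : (0:ℝ) < 1 + t * u ^ 2 := by positivity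
    have hB : Real.sqrt (1 + t * u ^ 2) ^ 2 = 1 + t * u ^ 2 := Real.sq_sqrt htu.le
    have hBpos' := hBpos u
    have hBne := hBpos'.ne'
    have hune : u ≠ -1 := by linarith
    have hune' : u ≠ 1 := hu1.ne
    have d_arcsin : HasDerivAt Real.arcsin (1 / Real.sqrt (1 - u ^ 2)) u :=
      Real.hasDerivAt_arcsin hune hune'
    have dinner : HasDerivAt (fun x : ℝ => 1 - x ^ 2) (-(2 * u)) u := by
      simpa using ((hasDerivAt_pow 2 u).const_sub 1)
    have dsqrt : HasDerivAt (fun x : ℝ => Real.sqrt (1 - x ^ 2))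
        (-(2 * u) / (2 * Real.sqrt (1 - u ^ 2))) u := dinner.sqrt h1u.ne'
    have dmul : HasDerivAt (fun x : ℝ => x * Real.sqrt (1 - x ^ 2))
        (1 * Real.sqrt (1 - u ^ 2) + u * (-(2 * u) / (2 * Real.sqrt (1 - u ^ 2)))) u :=
      (hasDerivAt_id u).mul dsqrt
    have ddenin : HasDerivAt (fun x : ℝ => 1 + t * x ^ 2) (t * (2 * u)) u := by
      simpa using ((hasDerivAt_pow 2 u).const_mul t).const_add 1
    have ddensqrt : HasDerivAt (fun x : ℝ => Real.sqrt (1 + t * x ^ 2))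
        (t * (2 * u) / (2 * Real.sqrt (1 + t * u ^ 2))) u := ddenin.sqrt htu.ne'
    have dden : HasDerivAt (fun x : ℝ => s * Real.sqrt (1 + t * x ^ 2))
        (s * (t * (2 * u) / (2 * Real.sqrt (1 + t * u ^ 2)))) u := ddensqrt.const_mul s
    have hdenne : s * Real.sqrt (1 + t * u ^ 2) ≠ 0 := by positivity
    have dh : HasDerivAt (fun x : ℝ => x / (s * Real.sqrt (1 + t * x ^ 2)))
        ((1 * (s * Real.sqrt (1 + t * u ^ 2)) -
          u * (s * (t * (2 * u) / (2 * Real.sqrt (1 + t * u ^ 2)))))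
          / (s * Real.sqrt (1 + t * u ^ 2)) ^ 2) u :=
      (hasDerivAt_id u).div dden hdenne
    have hsqlt : (u / (s * Real.sqrt (1 + t * u ^ 2))) ^ 2 < 1 := by
      rw [div_pow, div_lt_one (by positivity), mul_pow, hB]
      nlinarith
    have hval1 : u / (s * Real.sqrt (1 + t * u ^ 2)) ≠ -1 := by
      intro h; rw [h] at hsqlt; norm_num at hsqlt
    have hval2 : u / (s * Real.sqrt (1 + t * u ^ 2)) ≠ 1 := by
      intro h; rw [h] at hsqlt; norm_num at hsqlt
    have darcsin2 : HasDerivAt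
        (fun x : ℝ => Real.arcsin (x / (s * Real.sqrt (1 + t * x ^ 2))))
        ((1 / Real.sqrt (1 - (u / (s * Real.sqrt (1 + t * u ^ 2))) ^ 2)) *
          ((1 * (s * Real.sqrt (1 + t * u ^ 2)) -
          u * (s * (t * (2 * u) / (2 * Real.sqrt (1 + t * u ^ 2)))))
          / (s * Real.sqrt (1 + t * u ^ 2)) ^ 2)) u :=
      (Real.hasDerivAt_arcsin hval1 hval2).comp (h₂ := Real.arcsin) u dh
    -- simplify the sqrt argument
    have harg : 1 - (u / (s * Real.sqrt (1 + t * u ^ 2))) ^ 2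
        = (1 - u ^ 2) / (1 + t * u ^ 2) := by
      rw [div_pow, mul_pow, hB]
      field_simp
      linear_combination (u ^ 2) * hinv
    have hsqrt_simp : Real.sqrt (1 - (u / (s * Real.sqrt (1 + t * u ^ 2))) ^ 2)
        = Real.sqrt (1 - u ^ 2) / Real.sqrt (1 + t * u ^ 2) := by
      rw [harg, Real.sqrt_div h1u.le]
    rw [hsqrt_simp] at darcsin2
    have dF : HasDerivAt F
        (s * (1 / Real.sqrt (1 - u ^ 2) +
            (1 * Real.sqrt (1 - u ^ 2) + u * (-(2 * u) / (2 * Real.sqrt (1 - u ^ 2)))))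
          + (2 / t) * (1 / Real.sqrt (1 - u ^ 2))
          - (2 / (s * t)) *
            ((1 / (Real.sqrt (1 - u ^ 2) / Real.sqrt (1 + t * u ^ 2))) *
              ((1 * (s * Real.sqrt (1 + t * u ^ 2)) -
                u * (s * (t * (2 * u) / (2 * Real.sqrt (1 + t * u ^ 2)))))
                / (s * Real.sqrt (1 + t * u ^ 2)) ^ 2))) u := by
      exact (((d_arcsin.add dmul).const_mul s).add (d_arcsin.const_mul (2 / t))).sub
        (darcsin2.const_mul (2 / (s * t)))
    convert dF using 1
    set A := Real.sqrt (1 - u ^ 2)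
    set B := Real.sqrt (1 + t * u ^ 2)
    rw [← hB]
    field_simp
    linear_combination
      (-2*s^2*t + s^3*B^2*t) * hA
      + (2 - 2*s^2) * hB
      + (-2) * hinv
  -- continuity of F
  have hcont : Continuous F := by
    have hc0 : Continuous fun u : ℝ => 1 - u ^ 2 := continuous_const.sub (continuous_pow 2)
    have hc0' : Continuous fun u : ℝ => 1 + t * u ^ 2 :=
      continuous_const.add (continuous_const.mul (continuous_pow 2))
    have hc1 : Continuous fun u : ℝ => Real.sqrt (1 - u ^ 2) := Real.continuous_sqrt.comp hc0
    have hc2 : Continuous fun u : ℝ => s * Real.sqrt (1 + t * u ^ 2) :=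
      continuous_const.mul (Real.continuous_sqrt.comp hc0')
    have hc3 : Continuous fun u : ℝ => u / (s * Real.sqrt (1 + t * u ^ 2)) :=
      continuous_id.div hc2 fun x => by positivity
    exact ((continuous_const.mul (Real.continuous_arcsin.add
        (continuous_id.mul hc1))).add
        (continuous_const.mul Real.continuous_arcsin)).sub
      (continuous_const.mul (Real.continuous_arcsin.comp hc3))
  -- integrability
  have hint : IntervalIntegrable
      (fun u => (2 * s - 2 / (1 + t * u ^ 2)) * Real.sqrt (1 - u ^ 2)) volume 0 1 := by
    apply Continuous.intervalIntegrable
    have hc0 : Continuous fun u : ℝ => 1 - u ^ 2 := continuous_const.sub (continuous_pow 2)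
    have hc0' : Continuous fun u : ℝ => 1 + t * u ^ 2 :=
      continuous_const.add (continuous_const.mul (continuous_pow 2))
    have : Continuous fun u : ℝ => 2 / (1 + t * u ^ 2) :=
      continuous_const.div hc0' fun x => by positivity
    exact ((continuous_const.sub this)).mul (Real.continuous_sqrt.comp hc0)
  have hFTC := intervalIntegral.integral_eq_sub_of_hasDerivAt_of_le (by norm_num)
    hcont.continuousOn key hint
  -- evaluate endpoints
  have hF0 : F 0 = 0 := by
    simp [hF]
  have hF1 : F 1 = s * (Real.pi / 2) + (2 / t) * (Real.pi / 2) - (2 / (s * t)) * (Real.pi / 2) := by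
    have h1 : Real.sqrt (1 - (1:ℝ) ^ 2) = 0 := by norm_num
    have h2 : (1:ℝ) / (s * Real.sqrt (1 + t * 1 ^ 2)) = 1 := by
      have : Real.sqrt (1 + t * 1 ^ 2) = 1 / s := by
        rw [show 1 + t * (1:ℝ) ^ 2 = 1 / s ^ 2 by rw [ht_def]; ring]
        rw [show (1:ℝ) / s ^ 2 = (1 / s) ^ 2 by ring]
        exact Real.sqrt_sq (by positivity)
      rw [this]; field_simp
    simp only [hF, h1, h2, Real.arcsin_one, mul_zero, add_zero]
  -- rewrite the integrand
  have hcongr : (∫ u in (0:ℝ)..1, (2 * s - 2 / (1 + u ^ 2 * b ^ 2 / 4)) * Real.sqrt (1 - u ^ 2))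
      = ∫ u in (0:ℝ)..1, (2 * s - 2 / (1 + t * u ^ 2)) * Real.sqrt (1 - u ^ 2) := by
    apply intervalIntegral.integral_congr
    intro u _
    rw [hb2]; ring_nf
  rw [hcongr, hFTC, hF0, hF1, hb2]
  have hpine : Real.pi ≠ 0 := Real.pi_ne_zero
  field_simp
  linear_combination (4 * Real.pi) * hinv
end

section
/- There exists R > 0 such that for every complex ζ with |ζ| ≥ R: if Im ζ > 0 then log(|ζ − 2i|/|ζ + 2i|) + Im ζ > 0, and if Im ζ < 0 then log(|ζ − 2i|/|ζ + 2i|) + Im ζ < 0. -/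
lemma aux7 (ζ : ℂ) (h : 100 ≤ ‖ζ‖) (hy : 0 < ζ.im) :
    0 < Real.log (‖ζ - 2 * Complex.I‖ / ‖ζ + 2 * Complex.I‖) + ζ.im := by
  set x := ζ.re
  set y := ζ.im
  set N := x ^ 2 + (y - 2) ^ 2 with hNdef
  set D := x ^ 2 + (y + 2) ^ 2 with hDdef
  have habs2 : (10000 : ℝ) ≤ x ^ 2 + y ^ 2 := by
    have h2 : (100:ℝ)*100 ≤ ‖ζ‖ * ‖ζ‖ := by
      exact mul_le_mul h h (by norm_num) (norm_nonneg ζ)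
    have := Complex.sq_norm ζ
    have hns : Complex.normSq ζ = x ^ 2 + y ^ 2 := by
      simp [Complex.normSq_apply, x, y]; ring
    nlinarith [this]
  have hD : (10000 : ℝ) ≤ D := by nlinarith [sq_nonneg y]
  have hy2 : y ^ 2 ≤ D := by nlinarith
  have h16 : 16 * y ≤ D := by nlinarith [sq_nonneg (y - 100)]
  have hND : N = D - 8 * y := by ring
  have hN : D / 2 ≤ N := by nlinarith
  have hNpos : 0 < N := by nlinarith
  have hDpos : (0:ℝ) < D := by nlinarith
  have ha : ‖ζ - 2 * Complex.I‖ = Real.sqrt N := by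
    rw [Complex.norm_def]
    congr 1
    simp [Complex.normSq_apply, x, y]
    ring
  have hb : ‖ζ + 2 * Complex.I‖ = Real.sqrt D := by
    rw [Complex.norm_def]
    congr 1
    simp [Complex.normSq_apply, x, y]
    ring
  have hlog : Real.log (‖ζ - 2 * Complex.I‖ / ‖ζ + 2 * Complex.I‖)
      = (Real.log N - Real.log D) / 2 := by
    rw [ha, hb, Real.log_div (by positivity) (by positivity),
      Real.log_sqrt hNpos.le, Real.log_sqrt hDpos.le]
    ring
  rw [hlog]
  have h1 : Real.log (D / N) ≤ D / N - 1 := Real.log_le_sub_one_of_pos (by positivity)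
  have h2 : D / N - 1 = 8 * y / N := by field_simp; linarith [hND]
  have h3 : 8 * y / N ≤ 8 * y / 5000 := by
    apply div_le_div_of_nonneg_left (by linarith) (by norm_num)
    nlinarith
  have h4 : Real.log (D / N) = Real.log D - Real.log N :=
    Real.log_div (by positivity) (by positivity)
  nlinarith [h1, h2, h3, h4]

/-- There exists `R > 0` such that for all complex `ζ` with `|ζ| ≥ R`:
if `Im ζ > 0` then `log(|ζ−2i|/|ζ+2i|) + Im ζ > 0`, and if `Im ζ < 0` then
`log(|ζ−2i|/|ζ+2i|) + Im ζ < 0`. -/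
theorem statement7 : ∃ R : ℝ, 0 < R ∧ ∀ ζ : ℂ, R ≤ ‖ζ‖ →
    (0 < ζ.im →
      0 < Real.log (‖ζ - 2 * Complex.I‖ / ‖ζ + 2 * Complex.I‖)
            + ζ.im) ∧
    (ζ.im < 0 →
      Real.log (‖ζ - 2 * Complex.I‖ / ‖ζ + 2 * Complex.I‖)
          + ζ.im < 0) := by
  refine ⟨100, by norm_num, fun ζ hζ => ⟨fun hy => aux7 ζ hζ hy, fun hy => ?_⟩⟩
  have h1 := aux7 (-ζ) (by simpa using hζ) (by simpa using hy)
  have e1 : -ζ - 2 * Complex.I = -(ζ + 2 * Complex.I) := by ring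
  have e2 : -ζ + 2 * Complex.I = -(ζ - 2 * Complex.I) := by ring
  rw [e1, e2, norm_neg, norm_neg, Complex.neg_im] at h1
  have : ‖ζ + 2 * Complex.I‖ / ‖ζ - 2 * Complex.I‖
      = (‖ζ - 2 * Complex.I‖ / ‖ζ + 2 * Complex.I‖)⁻¹ := by
    rw [inv_div]
  rw [this, Real.log_inv] at h1
  linarith
end

section
/- Let μ be a probability measure on a measurable space Ω, let θ > 0, let (Xₙ)_{n≥1} be a sequence of measurable real-valued functions on Ω, let s be a real number, and let F : ℝ → ℝ be continuous at s. Suppose there is ε > 0 such that for every u ∈ (s − ε, s + ε), (1/n²)·log ∫ exp(−exp(Xₙ(ω) − (2n/θ)·u)) dμ(ω) converges to −F(u) as n → ∞. Then (1/n²)·log μ({ω : Xₙ(ω) ≤ (2n/θ)·s}) converges to −F(s) as n → ∞. -/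
open MeasureTheory Filter

private lemma growth_aux (c C : ℝ) (hc : 0 < c) :
    Tendsto (fun x : ℝ => Real.exp (c * x) - C * x ^ 2) atTop atTop := by
  have h1 : Tendsto (fun y : ℝ => (Real.exp y / y ^ 2 + -(C / c ^ 2)) * y ^ 2) atTop atTop :=
    (tendsto_atTop_add_const_right _ _ (Real.tendsto_exp_div_pow_atTop 2)).atTop_mul_atTop₀
      (tendsto_pow_atTop two_ne_zero)
  have h2 : Tendsto (fun y : ℝ => Real.exp y - C / c ^ 2 * y ^ 2) atTop atTop := by
    refine h1.congr' ?_
    filter_upwards [eventually_gt_atTop (0 : ℝ)] with y hy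
    have hy2 : y ^ 2 ≠ 0 := by positivity
    field_simp
    ring
  have h3 := h2.comp (Tendsto.const_mul_atTop hc tendsto_id)
  refine h3.congr fun x => ?_
  have hc2 : c ^ 2 ≠ 0 := by positivity
  simp only [Function.comp, id]
  field_simp

private lemma growth_nat (c C L : ℝ) (hc : 0 < c) :
    ∀ᶠ n : ℕ in atTop, C * (n : ℝ) ^ 2 - L ≤ Real.exp (c * n) := by
  have h := (growth_aux c C hc).comp (tendsto_natCast_atTop_atTop (R := ℝ))
  filter_upwards [h.eventually_ge_atTop (-L)] with n hn
  simp only [Function.comp] at hn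
  linarith

private lemma int_aux {Ω : Type*} [MeasurableSpace Ω] (μ : Measure Ω) [IsProbabilityMeasure μ]
    {Y : Ω → ℝ} (hY : Measurable Y) (b : ℝ) :
    Integrable (fun ω => Real.exp (-Real.exp (Y ω - b))) μ := by
  refine Integrable.mono' (integrable_const 1) ?_ ?_
  · exact (Measurable.stronglyMeasurable (by measurability)).aestronglyMeasurable
  · refine Filter.Eventually.of_forall fun ω => ?_
    rw [Real.norm_eq_abs, abs_of_pos (Real.exp_pos _)]
    exact Real.exp_le_one_iff.mpr (neg_nonpos.mpr (Real.exp_pos _).le)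

private lemma pos_aux {Ω : Type*} [MeasurableSpace Ω] (μ : Measure Ω) [IsProbabilityMeasure μ]
    {Y : Ω → ℝ} (hY : Measurable Y) (b : ℝ) :
    0 < ∫ ω, Real.exp (-Real.exp (Y ω - b)) ∂μ := by
  rw [integral_pos_iff_support_of_nonneg (fun ω => (Real.exp_pos _).le) (int_aux μ hY b)]
  have hsupp : Function.support (fun ω => Real.exp (-Real.exp (Y ω - b))) = Set.univ := by
    ext ω; simp [Function.mem_support, (Real.exp_pos _).ne']
  rw [hsupp, measure_univ]
  exact one_pos

private lemma upper_aux {Ω : Type*} [MeasurableSpace Ω] (μ : Measure Ω) [IsProbabilityMeasure μ]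
    {Y : Ω → ℝ} (hY : Measurable Y) (a : ℝ) :
    Real.exp (-1) * (μ {ω | Y ω ≤ a}).toReal ≤ ∫ ω, Real.exp (-Real.exp (Y ω - a)) ∂μ := by
  have hA : MeasurableSet {ω | Y ω ≤ a} := measurableSet_le hY measurable_const
  have hint := integral_indicator_const (μ := μ) (Real.exp (-1)) hA
  have hle : ∀ ω, ({ω | Y ω ≤ a}).indicator (fun _ => Real.exp (-1)) ω
      ≤ Real.exp (-Real.exp (Y ω - a)) := by
    intro ω
    by_cases hω : ω ∈ {ω | Y ω ≤ a}
    · rw [Set.indicator_of_mem hω]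
      refine Real.exp_le_exp.2 ?_
      have h1 : Real.exp (Y ω - a) ≤ 1 :=
        Real.exp_le_one_iff.2 (by simpa [sub_nonpos] using hω)
      linarith
    · rw [Set.indicator_of_notMem hω]
      positivity
  calc Real.exp (-1) * (μ {ω | Y ω ≤ a}).toReal
      = ∫ ω, ({ω | Y ω ≤ a}).indicator (fun _ => Real.exp (-1)) ω ∂μ := by
        rw [hint, smul_eq_mul, mul_comm]; rfl
    _ ≤ ∫ ω, Real.exp (-Real.exp (Y ω - a)) ∂μ :=
        integral_mono ((integrable_const _).indicator hA) (int_aux μ hY a) hle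

private lemma lower_aux {Ω : Type*} [MeasurableSpace Ω] (μ : Measure Ω) [IsProbabilityMeasure μ]
    {Y : Ω → ℝ} (hY : Measurable Y) (a b : ℝ) :
    ∫ ω, Real.exp (-Real.exp (Y ω - b)) ∂μ
      ≤ (μ {ω | Y ω ≤ a}).toReal + Real.exp (-Real.exp (a - b)) := by
  have hA : MeasurableSet {ω | Y ω ≤ a} := measurableSet_le hY measurable_const
  have hle : ∀ ω, Real.exp (-Real.exp (Y ω - b))
      ≤ ({ω | Y ω ≤ a}).indicator (fun _ => (1 : ℝ)) ω + Real.exp (-Real.exp (a - b)) := by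
    intro ω
    by_cases hω : ω ∈ {ω | Y ω ≤ a}
    · rw [Set.indicator_of_mem hω]
      have h1 : Real.exp (-Real.exp (Y ω - b)) ≤ 1 :=
        Real.exp_le_one_iff.2 (neg_nonpos.2 (Real.exp_pos _).le)
      have h2 := (Real.exp_pos (-Real.exp (a - b))).le
      linarith
    · rw [Set.indicator_of_notMem hω]
      have hω' : a < Y ω := lt_of_not_ge hω
      have h1 : Real.exp (a - b) ≤ Real.exp (Y ω - b) := Real.exp_le_exp.2 (by linarith)
      have h2 : Real.exp (-Real.exp (Y ω - b)) ≤ Real.exp (-Real.exp (a - b)) :=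
        Real.exp_le_exp.2 (by linarith)
      linarith
  calc ∫ ω, Real.exp (-Real.exp (Y ω - b)) ∂μ
      ≤ ∫ ω, (({ω | Y ω ≤ a}).indicator (fun _ => (1 : ℝ)) ω + Real.exp (-Real.exp (a - b))) ∂μ :=
        integral_mono (int_aux μ hY b)
          (((integrable_const _).indicator hA).add (integrable_const _)) hle
    _ = (μ {ω | Y ω ≤ a}).toReal + Real.exp (-Real.exp (a - b)) := by
        rw [integral_add ((integrable_const _).indicator hA) (integrable_const _),
          integral_indicator_const _ hA, integral_const]
        simp; rfl

/-- Transfer of the large deviation limit from the doubly-exponentially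
damped Laplace functional to the lower tail probability: if `F` is continuous at `s` and
for some `ε > 0` and all `u ∈ (s−ε, s+ε)`,
`(1/n²) log ∫ exp(−exp(Xₙ − (2n/θ)u)) dμ → −F(u)`, then
`(1/n²) log μ{Xₙ ≤ (2n/θ)s} → −F(s)`. -/
theorem statement10 {Ω : Type*} [MeasurableSpace Ω] (μ : Measure Ω) [IsProbabilityMeasure μ]
    (θ : ℝ) (hθ : 0 < θ) (X : ℕ → Ω → ℝ) (hX : ∀ n, Measurable (X n))
    (s : ℝ) (F : ℝ → ℝ) (hF : ContinuousAt F s)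
    (h : ∃ ε > 0, ∀ u ∈ Set.Ioo (s - ε) (s + ε),
      Tendsto (fun n : ℕ =>
          (1 / (n : ℝ) ^ 2) *
            Real.log (∫ ω, Real.exp (-Real.exp (X n ω - 2 * (n : ℝ) / θ * u)) ∂μ))
        atTop (nhds (-F u))) :
    Tendsto (fun n : ℕ =>
        (1 / (n : ℝ) ^ 2) *
          Real.log ((μ {ω | X n ω ≤ 2 * (n : ℝ) / θ * s}).toReal))
      atTop (nhds (-F s)) := by
  obtain ⟨ε, hε, h⟩ := h
  have hzero : Tendsto (fun n : ℕ => 1 / (n : ℝ) ^ 2) atTop (nhds 0) := by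
    have hpow : Tendsto (fun n : ℕ => ((n : ℝ) ^ 2)) atTop atTop :=
      (tendsto_pow_atTop two_ne_zero).comp (tendsto_natCast_atTop_atTop (R := ℝ))
    rw [show (fun n : ℕ => 1 / (n : ℝ) ^ 2) = (fun n : ℕ => ((n : ℝ) ^ 2))⁻¹ by ext n; simp [one_div]]
    exact hpow.inv_tendsto_atTop
  -- key: for u ∈ (s-ε, s), eventually  (1/2) E_n(u) ≤ P_n
  have key : ∀ u, s - ε < u → u < s →
      ∀ᶠ n : ℕ in atTop,
        (1 / 2) * (∫ ω, Real.exp (-Real.exp (X n ω - 2 * (n : ℝ) / θ * u)) ∂μ)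
          ≤ (μ {ω | X n ω ≤ 2 * (n : ℝ) / θ * s}).toReal := by
    intro u hu1 hu2
    have htu := h u ⟨hu1, by linarith⟩
    have hc : 0 < 2 * (s - u) / θ := div_pos (by linarith) hθ
    have h1 : ∀ᶠ n : ℕ in atTop, -F u - 1 ≤
        (1 / (n : ℝ) ^ 2) *
          Real.log (∫ ω, Real.exp (-Real.exp (X n ω - 2 * (n : ℝ) / θ * u)) ∂μ) :=
      htu.eventually (eventually_ge_nhds (by linarith))
    filter_upwards [h1, growth_nat (2 * (s - u) / θ) (F u + 1) (Real.log (1 / 2)) hc,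
      eventually_ge_atTop 1] with n hn1 hn2 hn3
    set En := ∫ ω, Real.exp (-Real.exp (X n ω - 2 * (n : ℝ) / θ * u)) ∂μ with hEn
    have hEpos : 0 < En := pos_aux μ (hX n) _
    have hn' : (1 : ℝ) ≤ (n : ℝ) := Nat.one_le_cast.2 hn3
    have hn2pos : (0 : ℝ) < (n : ℝ) ^ 2 := by positivity
    have hlog : (-F u - 1) * (n : ℝ) ^ 2 ≤ Real.log En := by
      have := mul_le_mul_of_nonneg_right hn1 hn2pos.le
      calc (-F u - 1) * (n : ℝ) ^ 2 ≤ (1 / (n : ℝ) ^ 2) * Real.log En * (n : ℝ) ^ 2 := this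
        _ = Real.log En := by field_simp
    have hab : 2 * (n : ℝ) / θ * s - 2 * (n : ℝ) / θ * u = 2 * (s - u) / θ * n := by
      field_simp
    have hlow := lower_aux μ (hX n) (2 * (n : ℝ) / θ * s) (2 * (n : ℝ) / θ * u)
    rw [hab] at hlow
    have ht : Real.exp (-Real.exp (2 * (s - u) / θ * n)) ≤ 1 / 2 * En := by
      have hexp : Real.exp (-Real.exp (2 * (s - u) / θ * n))
          ≤ Real.exp (Real.log (1 / 2) + Real.log En) := by
        apply Real.exp_le_exp.2
        have : (F u + 1) * (n : ℝ) ^ 2 - Real.log (1 / 2)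
            ≤ Real.exp (2 * (s - u) / θ * n) := hn2
        linarith
      rwa [← Real.log_mul (by norm_num) hEpos.ne',
        Real.exp_log (by positivity)] at hexp
    linarith
  rw [tendsto_order]
  constructor
  · -- liminf side: c < -F s
    intro c hc
    have hFc : F s < -c := by linarith
    obtain ⟨δ, hδ, hδ'⟩ := Metric.eventually_nhds_iff.1 (hF.eventually (eventually_lt_nhds hFc))
    set u := s - min δ ε / 2 with hu_def
    have hmin : 0 < min δ ε := lt_min hδ hε
    have hu1 : s - ε < u := by
      have := min_le_right δ ε; simp only [hu_def]; linarith
    have hu2 : u < s := by simp only [hu_def]; linarith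
    have hFu : F u < -c := by
      apply hδ'
      rw [Real.dist_eq]
      have := min_le_left δ ε
      rw [abs_of_nonpos (by simp only [hu_def]; linarith)]
      simp only [hu_def]; linarith
    have htu := h u ⟨hu1, by linarith⟩
    have hg : Tendsto (fun n : ℕ => (1 / (n : ℝ) ^ 2) * Real.log (1 / 2) +
        (1 / (n : ℝ) ^ 2) *
          Real.log (∫ ω, Real.exp (-Real.exp (X n ω - 2 * (n : ℝ) / θ * u)) ∂μ))
        atTop (nhds (-F u)) := by
      simpa using (hzero.mul_const (Real.log (1 / 2))).add htu
    filter_upwards [key u hu1 hu2, hg.eventually (eventually_gt_nhds (by linarith : c < -F u))]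
      with n h1 h2
    set En := ∫ ω, Real.exp (-Real.exp (X n ω - 2 * (n : ℝ) / θ * u)) ∂μ with hEn
    have hEpos : 0 < En := pos_aux μ (hX n) _
    have hPpos : (0 : ℝ) < (μ {ω | X n ω ≤ 2 * (n : ℝ) / θ * s}).toReal :=
      lt_of_lt_of_le (by positivity) h1
    have hloglog : Real.log (1 / 2 * En)
        ≤ Real.log ((μ {ω | X n ω ≤ 2 * (n : ℝ) / θ * s}).toReal) :=
      Real.log_le_log (by positivity) h1
    rw [← mul_add] at h2
    calc c < (1 / (n : ℝ) ^ 2) * Real.log (1 / 2 * En) := by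
          rw [Real.log_mul (by norm_num) hEpos.ne']; exact h2
      _ ≤ (1 / (n : ℝ) ^ 2) * Real.log ((μ {ω | X n ω ≤ 2 * (n : ℝ) / θ * s}).toReal) :=
          mul_le_mul_of_nonneg_left hloglog (by positivity)
  · -- limsup side: -F s < c
    intro c hc
    have htu := h s ⟨by linarith, by linarith⟩
    have hg : Tendsto (fun n : ℕ => (1 / (n : ℝ) ^ 2) * 1 +
        (1 / (n : ℝ) ^ 2) *
          Real.log (∫ ω, Real.exp (-Real.exp (X n ω - 2 * (n : ℝ) / θ * s)) ∂μ))
        atTop (nhds (-F s)) := by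
      simpa using (hzero.mul_const 1).add htu
    filter_upwards [key (s - ε / 2) (by linarith) (by linarith),
      hg.eventually (eventually_lt_nhds hc)] with n h1 h2
    have hEu : 0 < ∫ ω, Real.exp (-Real.exp (X n ω - 2 * (n : ℝ) / θ * (s - ε / 2))) ∂μ :=
      pos_aux μ (hX n) _
    have hPpos : (0 : ℝ) < (μ {ω | X n ω ≤ 2 * (n : ℝ) / θ * s}).toReal :=
      lt_of_lt_of_le (by positivity) h1
    set En := ∫ ω, Real.exp (-Real.exp (X n ω - 2 * (n : ℝ) / θ * s)) ∂μ with hEn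
    have hEpos : 0 < En := pos_aux μ (hX n) _
    have hup := upper_aux μ (hX n) (2 * (n : ℝ) / θ * s)
    have h4 : (μ {ω | X n ω ≤ 2 * (n : ℝ) / θ * s}).toReal ≤ Real.exp 1 * En := by
      have := mul_le_mul_of_nonneg_left hup (Real.exp_pos 1).le
      rwa [← mul_assoc, ← Real.exp_add, add_neg_cancel, Real.exp_zero, one_mul] at this
    have hlogP : Real.log ((μ {ω | X n ω ≤ 2 * (n : ℝ) / θ * s}).toReal)
        ≤ 1 + Real.log En := by
      calc Real.log ((μ {ω | X n ω ≤ 2 * (n : ℝ) / θ * s}).toReal)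
          ≤ Real.log (Real.exp 1 * En) := Real.log_le_log hPpos h4
        _ = 1 + Real.log En := by
            rw [Real.log_mul (Real.exp_ne_zero 1) hEpos.ne', Real.log_exp]
    have hmul := mul_le_mul_of_nonneg_left hlogP
      (by positivity : (0 : ℝ) ≤ 1 / (n : ℝ) ^ 2)
    rw [mul_add] at hmul
    linarith
end

section
/- For every θ > 0, the function t ↦ Re ψ(θ·(1 + i t/2)) is strictly increasing on the interval [0, ∞), where ψ(z) = Γ′(z)/Γ(z) is the complex digamma function. -/
open MeasureTheory Filter Set

/-- The complex digamma function `ψ(z) = Γ'(z)/Γ(z)`. -/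
noncomputable def psiC (z : ℂ) : ℂ := deriv Complex.Gamma z / Complex.Gamma z

/-- The real digamma function `ψ(x) = Γ'(x)/Γ(x)`. -/
noncomputable def psiR (x : ℝ) : ℝ := deriv Real.Gamma x / Real.Gamma x

/-- `ψ''(x)`: the second derivative of the digamma function at the real point `x`. -/
noncomputable def psiR'' (x : ℝ) : ℝ := iteratedDeriv 2 psiR x

/-- `b` solves the defining equation for the endpoint at parameters `(s, θ)`:
`∫₀¹ (2θ·Re ψ(θ + i u θ b/2) + 2s)/(π√(1−u²)) du = 0`. -/
noncomputable def defEqn (s θ b : ℝ) : Prop :=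
  (∫ u in (0:ℝ)..1,
      (2 * θ * (psiC ((θ : ℂ) + Complex.I * (u : ℂ) * (θ : ℂ) * (b : ℂ) / 2)).re + 2 * s)
        / (Real.pi * Real.sqrt (1 - u ^ 2))) = 0


noncomputable def fterm (n : ℕ) (z : ℂ) : ℂ := 1/(n+1) - 1/(z+n)

noncomputable def Tc (z : ℂ) : ℂ := ∑' n : ℕ, fterm n z

lemma re_add_nat_pos {z : ℂ} (hz : 0 < z.re) (n : ℕ) : 0 < (z + n).re := by
  simp only [Complex.add_re, Complex.natCast_re]
  positivity

lemma add_nat_ne_zero {z : ℂ} (hz : 0 < z.re) (n : ℕ) : z + n ≠ 0 := by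
  intro h
  have := re_add_nat_pos hz n
  rw [h] at this; simp at this

lemma norm_add_nat_ge {z : ℂ} (hz : 0 < z.re) (n : ℕ) :
    min z.re 1 * (n + 1) ≤ ‖z + n‖ := by
  have h1 : min z.re 1 * (n + 1) ≤ z.re + n := by
    have h2 : min z.re 1 ≤ z.re := min_le_left _ _
    have h3 : min z.re 1 ≤ 1 := min_le_right _ _
    nlinarith [Nat.cast_nonneg (α := ℝ) n]
  refine h1.trans ?_
  have : (z + n).re ≤ ‖z + n‖ := Complex.re_le_norm _
  simpa [Complex.add_re] using this

lemma fterm_eq {z : ℂ} (hz : 0 < z.re) (n : ℕ) :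
    fterm n z = (z - 1) / ((n + 1) * (z + n)) := by
  have h1 : ((n : ℂ) + 1) ≠ 0 := by
    have := Nat.cast_add_one_ne_zero (R := ℂ) n
    exact_mod_cast this
  have h2 := add_nat_ne_zero hz n
  rw [fterm]
  field_simp
  ring

lemma norm_fterm_le {z : ℂ} (hz : 0 < z.re) (n : ℕ) :
    ‖fterm n z‖ ≤ (‖z - 1‖ / min z.re 1) * (1 / (n + 1) ^ 2) := by
  have hm : 0 < min z.re 1 := lt_min hz one_pos
  have hn1 : (0:ℝ) < (n:ℝ) + 1 := by positivity
  rw [fterm_eq hz n, norm_div, norm_mul]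
  have hnorm_n : ‖((n : ℂ) + 1)‖ = (n : ℝ) + 1 := by
    have : ((n : ℂ) + 1) = ((n + 1 : ℕ) : ℂ) := by push_cast; ring
    rw [this, Complex.norm_natCast]; push_cast; ring
  rw [hnorm_n]
  have hb : min z.re 1 * ((n:ℝ) + 1) ≤ ‖z + n‖ := norm_add_nat_ge hz n
  have hzn : (0:ℝ) < ‖z + n‖ := lt_of_lt_of_le (by positivity) hb
  rw [div_le_iff₀ (by positivity)]
  have h4 : ‖z - 1‖ * (min z.re 1 * ((n:ℝ) + 1)) ≤ ‖z - 1‖ * ‖z + n‖ :=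
    mul_le_mul_of_nonneg_left hb (norm_nonneg _)
  have hexp : ‖z - 1‖ / min z.re 1 * (1 / ((n:ℝ) + 1) ^ 2) * (((n:ℝ) + 1) * (min z.re 1 * ((n:ℝ)+1)))
      = ‖z - 1‖ := by
    field_simp
  nlinarith [norm_nonneg (z - 1), mul_pos hm hn1]

lemma summable_aux : Summable (fun n : ℕ => 1 / ((n:ℝ) + 1) ^ 2) := by
  have h := Real.summable_one_div_nat_pow.mpr (le_refl 2)
  have := (summable_nat_add_iff (f := fun n : ℕ => 1 / (n:ℝ) ^ 2) 1).mpr h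
  simpa using this

lemma summable_fterm {z : ℂ} (hz : 0 < z.re) : Summable (fun n => fterm n z) := by
  apply Summable.of_norm
  apply Summable.of_nonneg_of_le (fun n => norm_nonneg _) (norm_fterm_le hz)
  exact summable_aux.mul_left _

lemma tendsto_inv_add_nat {z : ℂ} (hz : 0 < z.re) :
    Tendsto (fun n : ℕ => 1 / (z + n)) atTop (nhds 0) := by
  refine squeeze_zero_norm (a := fun n : ℕ => 1 / (min z.re 1 * (n + 1))) ?_ ?_
  · intro n
    rw [norm_div, norm_one]
    have hb := norm_add_nat_ge hz n
    have hm : 0 < min z.re 1 := lt_min hz one_pos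
    exact one_div_le_one_div_of_le (by positivity) hb
  · have hm : 0 < min z.re 1 := lt_min hz one_pos
    rw [show (0:ℝ) = 1 / min z.re 1 * 0 by ring]
    simp_rw [div_eq_mul_inv, one_mul, mul_inv]
    apply Tendsto.const_mul
    apply tendsto_inv_atTop_zero.comp
    exact tendsto_atTop_add_const_right _ _ tendsto_natCast_atTop_atTop

lemma Tc_rec {z : ℂ} (hz : 0 < z.re) : Tc (z + 1) = Tc z + 1 / z := by
  have hz1 : 0 < (z + 1).re := by simp [Complex.add_re]; linarith
  have hs1 := summable_fterm hz1
  have hs2 := summable_fterm hz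
  have hdiff : ∀ n : ℕ, fterm n (z + 1) - fterm n z = 1 / (z + n) - 1 / (z + (n + 1 : ℕ)) := by
    intro n
    simp only [fterm]
    push_cast
    ring_nf
  have hsum : Summable (fun n : ℕ => 1 / (z + n) - 1 / (z + (n + 1 : ℕ))) := by
    rw [show (fun n : ℕ => 1 / (z + n) - 1 / (z + (n + 1 : ℕ))) = fun n => fterm n (z+1) - fterm n z from funext fun n => (hdiff n).symm]
    exact hs1.sub hs2
  have htel : HasSum (fun n : ℕ => 1 / (z + n) - 1 / (z + (n + 1 : ℕ))) (1 / z) := by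
    have h1 := hsum.hasSum
    have h2 := h1.tendsto_sum_nat
    have h3 : ∀ N : ℕ, ∑ n ∈ Finset.range N, (1 / (z + n) - 1 / (z + (n+1 : ℕ))) = 1 / (z + (0:ℕ)) - 1 / (z + N) :=
      fun N => Finset.sum_range_sub' (fun n : ℕ => 1 / (z + n)) N
    have h4 : Tendsto (fun N : ℕ => 1 / (z + (0:ℕ)) - 1 / (z + N)) atTop (nhds (1 / z)) := by
      have := (tendsto_inv_add_nat hz).const_sub (1 / (z + (0:ℕ)))
      simpa using this
    have h5 : Tendsto (fun N : ℕ => ∑ n ∈ Finset.range N, (1 / (z + n) - 1 / (z + (n+1:ℕ)))) atTop (nhds (1/z)) := by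
      simp_rw [h3]; exact h4
    have := tendsto_nhds_unique h2 h5
    rwa [this] at h1
  have : Tc (z + 1) - Tc z = 1 / z := by
    rw [Tc, Tc, ← Summable.tsum_sub hs1 hs2]
    rw [← htel.tsum_eq]
    congr 1
    exact funext hdiff
  linear_combination this

noncomputable def rterm (n : ℕ) (x : ℝ) : ℝ := 1/(n+1) - 1/(x+n)

noncomputable def TR (x : ℝ) : ℝ := ∑' n : ℕ, rterm n x

lemma fterm_ofReal (n : ℕ) (x : ℝ) : fterm n (x : ℂ) = ((rterm n x : ℝ) : ℂ) := by
  simp only [fterm, rterm]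
  push_cast
  ring

lemma summable_rterm {x : ℝ} (hx : 0 < x) : Summable (fun n => rterm n x) := by
  have h := summable_fterm (z := (x:ℂ)) (by simpa using hx)
  rw [show (fun n => fterm n (x:ℂ)) = (fun n => ((rterm n x : ℝ) : ℂ)) from funext fun n => fterm_ofReal n x] at h
  exact Complex.summable_ofReal.mp h

lemma Tc_ofReal {x : ℝ} : Tc (x : ℂ) = ((TR x : ℝ) : ℂ) := by
  rw [Tc, TR, Complex.ofReal_tsum]
  exact tsum_congr fun n => fterm_ofReal n x

lemma TR_one : TR 1 = 0 := by
  rw [TR]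
  convert tsum_zero with n
  simp [rterm, add_comm]

lemma TR_rec {x : ℝ} (hx : 0 < x) : TR (x + 1) = TR x + 1 / x := by
  have h := Tc_rec (z := (x:ℂ)) (by simpa using hx)
  rw [show ((x:ℂ) + 1) = ((x + 1 : ℝ) : ℂ) by push_cast; ring, Tc_ofReal, Tc_ofReal] at h
  have : ((TR (x+1) : ℝ) : ℂ) = (((TR x + 1/x : ℝ)) : ℂ) := by push_cast; rw [h]
  exact_mod_cast this

lemma TR_mono : MonotoneOn TR (Ioi (0:ℝ)) := by
  intro x hx y hy hxy
  rw [TR, TR]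
  refine Summable.tsum_le_tsum ?_ (summable_rterm hx) (summable_rterm hy)
  intro n
  simp only [rterm]
  have h1 : 0 < x + n := by have := Nat.cast_nonneg (α := ℝ) n; linarith [mem_Ioi.mp hx]
  gcongr

-- real digamma-like function
noncomputable def dlg (x : ℝ) : ℝ := deriv (fun y => Real.log (Real.Gamma y)) x

lemma dlg_diffat {x : ℝ} (hx : 0 < x) :
    DifferentiableAt ℝ (fun y => Real.log (Real.Gamma y)) x := by
  have h1 : DifferentiableAt ℝ Real.Gamma x :=
    Real.differentiableAt_Gamma fun m => ((neg_nonpos.mpr (Nat.cast_nonneg m)).trans_lt hx).ne'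
  have h2 : Real.Gamma x ≠ 0 := (Real.Gamma_pos_of_pos hx).ne'
  exact h1.log h2

lemma dlg_rec {x : ℝ} (hx : 0 < x) : dlg (x + 1) = dlg x + 1 / x := by
  have h_rec : ∀ y : ℝ, 0 < y → Real.log (Real.Gamma (y+1)) = Real.log (Real.Gamma y) + Real.log y := by
    intro y hy
    rw [Real.Gamma_add_one hy.ne', Real.log_mul hy.ne' (Real.Gamma_pos_of_pos hy).ne', add_comm]
  rw [dlg, dlg, ← deriv_comp_add_const, one_div, ← Real.deriv_log,
    ← deriv_add (dlg_diffat hx) (Real.differentiableAt_log hx.ne')]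
  apply Filter.EventuallyEq.deriv_eq
  filter_upwards [eventually_gt_nhds hx] using h_rec

lemma dlg_mono : MonotoneOn dlg (Ioi (0:ℝ)) := by
  have := Real.convexOn_log_Gamma.monotoneOn_deriv (fun x hx => by
    have := dlg_diffat (mem_Ioi.mp hx)
    simpa [Function.comp_def] using this)
  intro x hx y hy hxy
  have h := this hx hy hxy
  simpa [dlg, Function.comp_def] using h

noncomputable def EE (x : ℝ) : ℝ := dlg x - TR x

lemma EE_rec {x : ℝ} (hx : 0 < x) : EE (x + 1) = EE x := by
  rw [EE, EE, dlg_rec hx, TR_rec hx]; ring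

lemma EE_add_nat {x : ℝ} (hx : 0 < x) (N : ℕ) : EE (x + N) = EE x := by
  induction N with
  | zero => simp
  | succ n ih =>
    have hxn : 0 < x + n := by have := Nat.cast_nonneg (α := ℝ) n; linarith
    have : x + (n + 1 : ℕ) = (x + n) + 1 := by push_cast; ring
    rw [this, EE_rec hxn, ih]

-- bound for a monotone fn with the recurrence: for x in [1,2], f(x+N) - f(1+N) in [0, 1/(1+N)]
lemma sandwich_aux {f : ℝ → ℝ} (hmono : MonotoneOn f (Ioi (0:ℝ)))
    (hrec : ∀ y : ℝ, 0 < y → f (y + 1) = f y + 1 / y) {x : ℝ} (hx1 : 1 ≤ x) (hx2 : x ≤ 2)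
    (N : ℕ) : 0 ≤ f (x + N) - f (1 + N) ∧ f (x + N) - f (1 + N) ≤ 1 / (1 + N) := by
  have hN : (0:ℝ) ≤ N := Nat.cast_nonneg N
  have h1N : (0:ℝ) < 1 + N := by linarith
  have hxN : (0:ℝ) < x + N := by linarith
  constructor
  · have := hmono (mem_Ioi.mpr h1N) (mem_Ioi.mpr hxN) (by linarith)
    linarith
  · have h2 : f (x + N) ≤ f ((1 + N) + 1) := by
      apply hmono (mem_Ioi.mpr hxN) (mem_Ioi.mpr (by linarith)) (by linarith)
    rw [hrec (1 + N) h1N] at h2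
    linarith

lemma EE_eq_on_Icc {x : ℝ} (hx1 : 1 ≤ x) (hx2 : x ≤ 2) : EE x = EE 1 := by
  have key : ∀ N : ℕ, |EE x - EE 1| ≤ 1 / (1 + N) := by
    intro N
    have hx0 : (0:ℝ) < x := by linarith
    have h1 : EE x = EE (x + N) := (EE_add_nat hx0 N).symm
    have h2 : EE 1 = EE (1 + N) := (EE_add_nat one_pos N).symm
    have hd := sandwich_aux dlg_mono (fun y hy => dlg_rec hy) hx1 hx2 N
    have ht := sandwich_aux TR_mono (fun y hy => TR_rec hy) hx1 hx2 N
    rw [h1, h2]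
    rw [EE, EE, abs_le]
    constructor
    · linarith [hd.1, hd.2, ht.1, ht.2]
    · linarith [hd.1, hd.2, ht.1, ht.2]
  by_contra hne
  have habs : 0 < |EE x - EE 1| := by
    rw [abs_pos, sub_ne_zero]
    exact fun h => hne h
  obtain ⟨N, hN⟩ := exists_nat_gt (1 / |EE x - EE 1|)
  have hinv : 1 / (1 + (N:ℝ)) < |EE x - EE 1| := by
    rw [div_lt_iff₀ (by positivity)]
    rw [div_lt_iff₀ habs] at hN
    nlinarith
  exact absurd (key N) (not_le.mpr hinv)

lemma dlg_eq_TR {x : ℝ} (hx : 0 < x) : dlg x = dlg 1 + TR x := by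
  suffices h : EE x = EE 1 by
    have h2 : dlg x - TR x = dlg 1 - TR 1 := h
    rw [TR_one] at h2; linarith
  -- reduce to (0, n+2]
  obtain ⟨n, hn⟩ := exists_nat_ge x
  have main : ∀ m : ℕ, ∀ y : ℝ, 0 < y → y ≤ m + 2 → EE y = EE 1 := by
    intro m
    induction m with
    | zero =>
      intro y hy hy2
      norm_num at hy2
      by_cases h1 : 1 ≤ y
      · exact EE_eq_on_Icc h1 hy2
      · push_neg at h1
        rw [← EE_rec hy]
        exact EE_eq_on_Icc (by linarith) (by linarith)
    | succ m ih =>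
      intro y hy hy2
      by_cases h1 : y ≤ m + 2
      · exact ih y hy h1
      · push_neg at h1
        have hym : 0 < y - 1 := by
          have : (0:ℝ) ≤ m := Nat.cast_nonneg m
          linarith
        have : EE ((y - 1) + 1) = EE (y - 1) := EE_rec hym
        rw [show (y-1) + 1 = y by ring] at this
        rw [this]
        apply ih _ hym
        push_cast at hy2 ⊢
        linarith
  exact main n x hx (by linarith)

def UU : Set ℂ := {z | 0 < z.re}

lemma UU_open : IsOpen UU := isOpen_lt continuous_const Complex.continuous_re

lemma Gamma_diffAt {z : ℂ} (hz : z ∈ UU) : DifferentiableAt ℂ Complex.Gamma z := by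
  apply Complex.differentiableAt_Gamma
  intro m h
  have : z.re = -(m:ℝ) := by rw [h]; simp
  have hz' : 0 < z.re := hz
  rw [this] at hz'
  have : (0:ℝ) ≤ m := Nat.cast_nonneg m
  linarith

lemma Gamma_ne_zero_UU {z : ℂ} (hz : z ∈ UU) : Complex.Gamma z ≠ 0 := by
  apply Complex.Gamma_ne_zero
  intro m h
  have : z.re = -(m:ℝ) := by rw [h]; simp
  have hz' : 0 < z.re := hz
  rw [this] at hz'
  have : (0:ℝ) ≤ m := Nat.cast_nonneg m
  linarith

lemma Gamma_analytic : AnalyticOnNhd ℂ Complex.Gamma UU := by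
  have h : DifferentiableOn ℂ Complex.Gamma UU :=
    fun z hz => (Gamma_diffAt hz).differentiableWithinAt
  exact h.analyticOnNhd UU_open

lemma psiC_analytic : AnalyticOnNhd ℂ psiC UU :=
  AnalyticOnNhd.div Gamma_analytic.deriv Gamma_analytic (fun z hz => Gamma_ne_zero_UU hz)

lemma Tc_diffAt {z : ℂ} (hz : z ∈ UU) : DifferentiableAt ℂ Tc z := by
  have hz' : 0 < z.re := hz
  set r := z.re / 2 with hr
  have hrpos : 0 < r := by positivity
  set V := Metric.ball z r with hV
  have hVopen : IsOpen V := Metric.isOpen_ball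
  have hre : ∀ w ∈ V, r < w.re := by
    intro w hw
    have : ‖w - z‖ < r := by simpa [hV, Metric.mem_ball, dist_eq_norm] using hw
    have h2 : |(w - z).re| ≤ ‖w - z‖ := Complex.abs_re_le_norm _
    have : |(w.re - z.re)| < r := by
      rw [← Complex.sub_re]; exact lt_of_le_of_lt h2 this
    have := abs_lt.mp this
    simp only [hr] at *
    linarith [this.1]
  have hdiff : DifferentiableOn ℂ Tc V := by
    have hK : ∀ w ∈ V, ‖w - 1‖ ≤ ‖z - 1‖ + r := by
      intro w hw
      have : ‖w - z‖ < r := by simpa [hV, Metric.mem_ball, dist_eq_norm] using hw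
      calc ‖w - 1‖ = ‖(z - 1) + (w - z)‖ := by ring_nf
        _ ≤ ‖z - 1‖ + ‖w - z‖ := norm_add_le _ _
        _ ≤ ‖z - 1‖ + r := by linarith
    refine Complex.differentiableOn_tsum_of_summable_norm
      (u := fun n => ((‖z - 1‖ + r) / min r 1) * (1 / (n + 1) ^ 2))
      (summable_aux.mul_left _) (fun n => ?_) hVopen (fun n w hw => ?_)
    · -- each fterm differentiable on V
      apply DifferentiableOn.sub (differentiableOn_const _)
      apply DifferentiableOn.div (differentiableOn_const _)
      · exact (differentiable_id.add_const _).differentiableOn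
      · intro w hw
        exact add_nat_ne_zero (lt_trans hrpos (hre w hw)) n
    · -- norm bound
      have hwre : 0 < w.re := lt_trans hrpos (hre w hw)
      have h1 := norm_fterm_le hwre n
      refine h1.trans ?_
      have hm : 0 < min r 1 := lt_min hrpos one_pos
      have hmw : min r 1 ≤ min w.re 1 := min_le_min (hre w hw).le le_rfl
      have h2 : ‖w - 1‖ / min w.re 1 ≤ (‖z - 1‖ + r) / min r 1 :=
        div_le_div₀ (by positivity) (hK w hw) hm hmw
      exact mul_le_mul_of_nonneg_right h2 (by positivity)
  exact (hdiff.differentiableAt (hVopen.mem_nhds (Metric.mem_ball_self hrpos)))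

lemma hasDerivAt_Gamma_ofReal {x : ℝ} (hx : 0 < x) :
    HasDerivAt Complex.Gamma (((deriv Real.Gamma x : ℝ)) : ℂ) (x : ℂ) := by
  set ρ : ℝ := ∫ t in Ioi (0:ℝ), t ^ (x - 1) * (Real.log t * Real.exp (-t)) with hρ
  have hxre : (0:ℝ) < (x:ℂ).re := by simpa using hx
  have h1 : HasDerivAt Complex.GammaIntegral
      (∫ t : ℝ in Ioi 0, (t:ℂ) ^ ((x:ℂ) - 1) * (Real.log t * Real.exp (-t))) (x:ℂ) :=
    Complex.hasDerivAt_GammaIntegral hxre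
  have h2 : (∫ t : ℝ in Ioi 0, (t:ℂ) ^ ((x:ℂ) - 1) * (Real.log t * Real.exp (-t))) = (ρ : ℂ) := by
    have hco : ∀ r : ℝ, Complex.ofReal r = @RCLike.ofReal ℂ _ r := fun r => rfl
    rw [hρ]
    conv_rhs => rw [hco, ← _root_.integral_ofReal]
    refine setIntegral_congr_fun measurableSet_Ioi (fun t ht => ?_)
    have ht' : (0:ℝ) < t := ht
    have hc : (t:ℂ) ^ ((x:ℂ) - 1) = ((t ^ (x - 1) : ℝ) : ℂ) := by
      rw [show ((x:ℂ) - 1) = ((x - 1 : ℝ) : ℂ) by push_cast; ring]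
      rw [Complex.ofReal_cpow ht'.le]
    rw [hc]
    push_cast [Complex.ofReal_exp]
    simp [Complex.ofReal_exp]
  rw [h2] at h1
  have h3 : HasDerivAt Complex.Gamma ((ρ : ℝ) : ℂ) (x:ℂ) := by
    apply h1.congr_of_eventuallyEq
    filter_upwards [UU_open.mem_nhds (show (x:ℂ) ∈ UU from hxre)] with w hw
    exact Complex.Gamma_eq_integral hw
  have h4 : HasDerivAt Real.Gamma ρ x := by
    have h5 := h3.real_of_complex
    have h6 : (fun y : ℝ => (Complex.Gamma (y:ℂ)).re) = Real.Gamma := by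
      funext y
      rw [Complex.Gamma_ofReal, Complex.ofReal_re]
    rw [h6] at h5
    simpa using h5
  rwa [h4.deriv]

lemma psiC_eq_on_real {x : ℝ} (hx : 0 < x) : psiC (x : ℂ) = ((dlg 1 : ℝ) : ℂ) + Tc (x : ℂ) := by
  have hΓpos := Real.Gamma_pos_of_pos hx
  have h1 : HasDerivAt Real.Gamma (deriv Real.Gamma x) x :=
    (Real.differentiableAt_Gamma fun m => ((neg_nonpos.mpr (Nat.cast_nonneg m)).trans_lt hx).ne').hasDerivAt
  have h2 : dlg x = deriv Real.Gamma x / Real.Gamma x := by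
    rw [dlg]
    exact (h1.log hΓpos.ne').deriv
  have h3 : psiC (x:ℂ) = ((dlg x : ℝ) : ℂ) := by
    rw [psiC, (hasDerivAt_Gamma_ofReal hx).deriv, Complex.Gamma_ofReal, h2]
    push_cast
    ring
  rw [h3, dlg_eq_TR hx, Tc_ofReal]
  push_cast
  ring

lemma psiC_eq_add_Tc : EqOn psiC (fun z => ((dlg 1 : ℝ) : ℂ) + Tc z) UU := by
  have hTc_an : AnalyticOnNhd ℂ Tc UU := by
    have h : DifferentiableOn ℂ Tc UU := fun z hz => (Tc_diffAt hz).differentiableWithinAt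
    exact h.analyticOnNhd UU_open
  have hg_an : AnalyticOnNhd ℂ (fun z => ((dlg 1 : ℝ) : ℂ) + Tc z) UU :=
    (analyticOnNhd_const).add hTc_an
  have hconn : IsPreconnected UU := (convex_halfSpace_re_gt 0).isPreconnected
  have h1 : (1:ℂ) ∈ UU := by simp [UU]
  apply psiC_analytic.eqOn_of_preconnected_of_frequently_eq hg_an hconn h1
  -- frequently equal near 1 via real sequence
  have hseq : Tendsto (fun k : ℕ => ((1 + 1/(k+1) : ℝ) : ℂ)) atTop (nhdsWithin 1 {(1:ℂ)}ᶜ) := by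
    apply tendsto_nhdsWithin_of_tendsto_nhds_of_eventually_within
    · have : Tendsto (fun k : ℕ => (1 + 1/((k:ℝ)+1))) atTop (nhds 1) := by
        have := tendsto_one_div_add_atTop_nhds_zero_nat (𝕜 := ℝ)
        have h2 := this.const_add (1:ℝ)
        simpa using h2
      have h3 := (Complex.continuous_ofReal.tendsto 1).comp this
      simpa [Function.comp_def] using h3
    · filter_upwards with k
      simp only [mem_compl_iff, mem_singleton_iff]
      intro h
      have : (1 + 1/((k:ℝ)+1)) = 1 := by exact_mod_cast h
      have hk : (0:ℝ) < 1/((k:ℝ)+1) := by positivity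
      linarith
  apply hseq.frequently
  apply Filter.Eventually.frequently
  filter_upwards with k
  have hx : (0:ℝ) < 1 + 1/((k:ℝ)+1) := by positivity
  exact psiC_eq_on_real hx

lemma re_fterm_strict {a y₁ y₂ : ℝ} (ha : 0 < a) (h1 : 0 ≤ y₁) (h2 : y₁ < y₂) (n : ℕ) :
    (fterm n ((a:ℂ) + (y₁:ℂ) * Complex.I)).re < (fterm n ((a:ℂ) + (y₂:ℂ) * Complex.I)).re := by
  have key : ∀ y : ℝ, (fterm n ((a:ℂ) + (y:ℂ) * Complex.I)).re
      = 1/(n+1) - (a + n) / ((a + n)^2 + y^2) := by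
    intro y
    have hre : ((a:ℂ) + (y:ℂ) * Complex.I + (n:ℂ)).re = a + n := by simp
    have him : ((a:ℂ) + (y:ℂ) * Complex.I + (n:ℂ)).im = y := by simp
    have hn : ((n:ℂ) + 1) = ((n + 1 : ℝ) : ℂ) := by push_cast; ring
    rw [fterm, Complex.sub_re, one_div, one_div, Complex.inv_re, Complex.inv_re,
      Complex.normSq_apply, Complex.normSq_apply, hre, him]
    rw [hn]
    simp only [Complex.ofReal_re, Complex.ofReal_im]
    rw [show (n + 1 : ℝ) * (n + 1) + 0 * 0 = (n+1)^2 by ring]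
    rw [show ((n:ℝ)+1) / ((n:ℝ)+1)^2 = 1/((n:ℝ)+1) by
      rw [pow_two]; rw [div_mul_eq_div_div]; rw [div_self (by positivity)]]
    ring_nf
  rw [key y₁, key y₂]
  have han : 0 < a + n := by have := Nat.cast_nonneg (α := ℝ) n; linarith
  have hd1 : 0 < (a+n)^2 + y₁^2 := by positivity
  have hlt : (a+n)^2 + y₁^2 < (a+n)^2 + y₂^2 := by nlinarith
  have := div_lt_div_of_pos_left han hd1 hlt
  linarith

lemma mem_UU_aux {a y : ℝ} (ha : 0 < a) : ((a:ℂ) + (y:ℂ) * Complex.I) ∈ UU := by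
  simpa [UU] using ha


/-- For every `θ > 0`, the function `t ↦ Re ψ(θ(1 + i t/2))` is strictly
increasing on `[0, ∞)`. -/
theorem statement15 (θ : ℝ) (hθ : 0 < θ) :
    StrictMonoOn (fun t : ℝ => (psiC ((θ : ℂ) * (1 + Complex.I * (t : ℂ) / 2))).re)
      (Set.Ici (0 : ℝ)) := by
  intro t₁ ht₁ t₂ ht₂ hlt
  have hz : ∀ t : ℝ, (θ : ℂ) * (1 + Complex.I * (t : ℂ) / 2) = (θ:ℂ) + ((θ * t / 2 : ℝ):ℂ) * Complex.I := by
    intro t; push_cast; ring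
  simp only [hz]
  set y₁ := θ * t₁ / 2 with hy1
  set y₂ := θ * t₂ / 2 with hy2
  have hy1nn : 0 ≤ y₁ := by rw [hy1]; have := mem_Ici.mp ht₁; positivity
  have hylt : y₁ < y₂ := by rw [hy1, hy2]; have := mem_Ici.mp ht₁; nlinarith
  set z₁ := (θ:ℂ) + (y₁:ℂ) * Complex.I with hz1
  set z₂ := (θ:ℂ) + (y₂:ℂ) * Complex.I with hz2
  have hm1 : z₁ ∈ UU := mem_UU_aux hθ
  have hm2 : z₂ ∈ UU := mem_UU_aux hθ
  have he1 := psiC_eq_add_Tc hm1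
  have he2 := psiC_eq_add_Tc hm2
  rw [he1, he2]
  simp only [Complex.add_re, Complex.ofReal_re]
  have hs1 : Summable (fun n => fterm n z₁) := summable_fterm hm1
  have hs2 : Summable (fun n => fterm n z₂) := summable_fterm hm2
  have hr1 : Summable (fun n => (fterm n z₁).re) := (Complex.hasSum_re hs1.hasSum).summable
  have hr2 : Summable (fun n => (fterm n z₂).re) := (Complex.hasSum_re hs2.hasSum).summable
  have hTc1 : (Tc z₁).re = ∑' n, (fterm n z₁).re := Complex.re_tsum hs1
  have hTc2 : (Tc z₂).re = ∑' n, (fterm n z₂).re := Complex.re_tsum hs2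
  rw [hTc1, hTc2]
  have hpos : 0 < ∑' n, ((fterm n z₂).re - (fterm n z₁).re) := by
    refine Summable.tsum_pos (hr2.sub hr1) (fun n => ?_) 0 ?_
    · exact le_of_lt (sub_pos.mpr (re_fterm_strict hθ hy1nn hylt n))
    · exact sub_pos.mpr (re_fterm_strict hθ hy1nn hylt 0)
  rw [Summable.tsum_sub hr2 hr1] at hpos
  linarith
end

section
/- Let θ > 0 and s ∈ ℝ, and define H(b) = ∫₀¹ (θ·Re ψ(θ + i u θ b/2) + s)/√(1 − u²) du for b ≥ 0. Then (H(b) − (π/2)(s + θψ(θ)))/b² tends to −(π/32)·θ³·ψ″(θ) as b → 0⁺; in other words H(b) = (π/2)(s + θψ(θ)) − (πθ³/32)·ψ″(θ)·b² + o(b²) as b → 0. -/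
open MeasureTheory Filter Set

namespace Stmt17Aux

open Real

lemma memU {z : ℂ} (hz : 0 < z.re) : ∀ m : ℕ, z ≠ -m := by
  intro m h
  rw [h] at hz
  simp only [Complex.neg_re, Complex.natCast_re] at hz
  have : (0:ℝ) ≤ m := m.cast_nonneg
  linarith

lemma psiC_analyticOnNhd : AnalyticOnNhd ℂ psiC {z : ℂ | 0 < z.re} := by
  have hopen : IsOpen {z : ℂ | 0 < z.re} := isOpen_lt continuous_const Complex.continuous_re
  have hGamma : AnalyticOnNhd ℂ Complex.Gamma {z : ℂ | 0 < z.re} :=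
    DifferentiableOn.analyticOnNhd
      (fun z hz => (Complex.differentiableAt_Gamma z (memU hz)).differentiableWithinAt) hopen
  exact (hGamma.deriv).div hGamma (fun z hz => Complex.Gamma_ne_zero (memU hz))

lemma deriv_Gamma_ofReal {x : ℝ} (hx : 0 < x) :
    deriv Complex.Gamma (x:ℂ) = ((deriv Real.Gamma x : ℝ) : ℂ) := by
  have hne : ∀ m : ℕ, (x:ℂ) ≠ -m := memU (by simpa using hx)
  have hrne : ∀ m : ℕ, x ≠ -m := by
    intro m h
    have : (0:ℝ) ≤ m := m.cast_nonneg
    linarith [h ▸ hx]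
  have h1 : HasDerivAt (fun t : ℝ => Complex.Gamma (t:ℂ)) (deriv Complex.Gamma (x:ℂ)) x :=
    (Complex.differentiableAt_Gamma _ hne).hasDerivAt.comp_ofReal
  have h2 : HasDerivAt (fun t : ℝ => ((Real.Gamma t : ℂ))) ((deriv Real.Gamma x : ℝ) : ℂ) x :=
    (Real.differentiableAt_Gamma hrne).hasDerivAt.ofReal_comp
  have h3 : (fun t : ℝ => Complex.Gamma (t:ℂ)) = fun t : ℝ => ((Real.Gamma t : ℂ)) :=
    funext fun t => Complex.Gamma_ofReal t
  rw [h3] at h1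
  exact h1.unique h2

lemma psiC_ofReal {x : ℝ} (hx : 0 < x) : psiC (x:ℂ) = ((psiR x : ℝ) : ℂ) := by
  rw [psiC, psiR, deriv_Gamma_ofReal hx, Complex.Gamma_ofReal, Complex.ofReal_div]

lemma reθ {θ : ℝ} (hθ : 0 < θ) : ((θ:ℂ)) ∈ {z : ℂ | 0 < z.re} := by simpa using hθ

/-- first derivative of psiC at a positive real point is real -/
lemma deriv_psiC_real {θ : ℝ} (hθ : 0 < θ) :
    deriv psiC (θ:ℂ) = ((deriv psiC (θ:ℂ)).re : ℂ) := by
  have hA : AnalyticAt ℂ psiC (θ:ℂ) := psiC_analyticOnNhd _ (reθ hθ)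
  have hu : HasDerivAt psiC (deriv psiC (θ:ℂ)) (θ:ℂ) := hA.differentiableAt.hasDerivAt
  have h1 : HasDerivAt (fun t : ℝ => psiC (t:ℂ)) (deriv psiC (θ:ℂ)) θ := hu.comp_ofReal
  have h3 : HasDerivAt (fun t : ℝ => (((psiC (t:ℂ)).re : ℝ) : ℂ))
      (((deriv psiC (θ:ℂ)).re : ℝ) : ℂ) θ := hu.real_of_complex.ofReal_comp
  have h4 : (fun t : ℝ => (((psiC (t:ℂ)).re : ℝ) : ℂ)) =ᶠ[nhds θ] fun t : ℝ => psiC (t:ℂ) := by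
    filter_upwards [eventually_gt_nhds hθ] with t ht
    rw [psiC_ofReal ht, Complex.ofReal_re]
  have h5 : HasDerivAt (fun t : ℝ => psiC (t:ℂ)) (((deriv psiC (θ:ℂ)).re : ℝ) : ℂ) θ :=
    h3.congr_of_eventuallyEq h4.symm
  exact h1.unique h5

lemma deriv_psiR_eq {x : ℝ} (hx : 0 < x) : deriv psiR x = (deriv psiC (x:ℂ)).re := by
  have hA : AnalyticAt ℂ psiC (x:ℂ) := psiC_analyticOnNhd _ (reθ hx)
  have h2 : HasDerivAt (fun t : ℝ => (psiC (t:ℂ)).re) ((deriv psiC (x:ℂ)).re) x :=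
    hA.differentiableAt.hasDerivAt.real_of_complex
  have h4 : (fun t : ℝ => (psiC (t:ℂ)).re) =ᶠ[nhds x] psiR := by
    filter_upwards [eventually_gt_nhds hx] with t ht
    rw [psiC_ofReal ht, Complex.ofReal_re]
  exact (h2.congr_of_eventuallyEq h4.symm).deriv

lemma psiR''_eq {θ : ℝ} (hθ : 0 < θ) : psiR'' θ = (iteratedDeriv 2 psiC (θ:ℂ)).re := by
  have hA : AnalyticOnNhd ℂ (deriv psiC) {z : ℂ | 0 < z.re} := psiC_analyticOnNhd.deriv
  have hD : HasDerivAt (deriv psiC) (deriv (deriv psiC) (θ:ℂ)) (θ:ℂ) :=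
    (hA _ (reθ hθ)).differentiableAt.hasDerivAt
  have h2 : HasDerivAt (fun x : ℝ => (deriv psiC (x:ℂ)).re) ((deriv (deriv psiC) (θ:ℂ)).re) θ :=
    hD.real_of_complex
  have h4 : (fun x : ℝ => (deriv psiC (x:ℂ)).re) =ᶠ[nhds θ] deriv psiR := by
    filter_upwards [eventually_gt_nhds hθ] with t ht
    rw [deriv_psiR_eq ht]
  have h5 : HasDerivAt (deriv psiR) ((deriv (deriv psiC) (θ:ℂ)).re) θ :=
    h2.congr_of_eventuallyEq h4.symm
  rw [psiR'', iteratedDeriv_succ, iteratedDeriv_one, h5.deriv,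
    iteratedDeriv_succ, iteratedDeriv_one]

lemma taylor (θ : ℝ) (hθ : 0 < θ) :
    ∃ δ > 0, ∃ C : ℝ, ∀ ε : ℝ, |ε| ≤ δ →
      |(psiC ((θ:ℂ) + (ε:ℂ) * Complex.I)).re - psiR θ + ε^2 * psiR'' θ / 2| ≤ C * |ε|^3 := by
  have hA : AnalyticAt ℂ psiC (θ:ℂ) := psiC_analyticOnNhd _ (reθ hθ)
  obtain ⟨p, hp⟩ := hA
  obtain ⟨r, hpr⟩ := hp
  have hcoeff : ∀ n : ℕ, n.factorial • p.coeff n = iteratedDeriv n psiC (θ:ℂ) := by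
    intro n
    rw [iteratedDeriv_eq_iteratedFDeriv]
    exact hpr.factorial_smul (1:ℂ) n
  have hc0 : p.coeff 0 = psiC (θ:ℂ) := by
    have := hcoeff 0
    simpa [iteratedDeriv_zero] using this
  have hc1 : p.coeff 1 = deriv psiC (θ:ℂ) := by
    have := hcoeff 1
    simpa [iteratedDeriv_one] using this
  have hc2 : (2:ℂ) * p.coeff 2 = iteratedDeriv 2 psiC (θ:ℂ) := by
    have := hcoeff 2
    rw [nsmul_eq_mul] at this
    norm_num at this
    exact_mod_cast this
  have hc2re : (p.coeff 2).re = psiR'' θ / 2 := by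
    have := congrArg Complex.re hc2
    rw [Complex.mul_re] at this
    norm_num at this
    rw [psiR''_eq hθ]
    linarith
  have hp' : HasFPowerSeriesAt psiC p (θ:ℂ) := ⟨r, hpr⟩
  obtain ⟨c, hc⟩ := (hp'.isBigO_sub_partialSum_pow 3).bound
  rw [Metric.eventually_nhds_iff] at hc
  obtain ⟨δ, hδ, hball⟩ := hc
  refine ⟨δ/2, by positivity, c, fun ε hε => ?_⟩
  set y : ℂ := (ε:ℂ) * Complex.I with hy
  have hny : ‖y‖ = |ε| := by simp [hy]
  have hdist : dist y 0 < δ := by rw [dist_zero_right, hny]; linarith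
  have hb := hball hdist
  rw [hny, Real.norm_eq_abs, abs_of_nonneg (by positivity : (0:ℝ) ≤ |ε|^3)] at hb
  have hps : p.partialSum 3 y = p.coeff 0 + y * p.coeff 1 + y^2 * p.coeff 2 := by
    simp only [FormalMultilinearSeries.partialSum, Finset.sum_range_succ, Finset.sum_range_zero,
      FormalMultilinearSeries.apply_eq_pow_smul_coeff, smul_eq_mul]
    ring
  have hysq : y^2 = -((ε^2 : ℝ) : ℂ) := by
    rw [hy, mul_pow, Complex.I_sq]; push_cast; ring
  have hre : (psiC ((θ:ℂ) + y) - p.partialSum 3 y).re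
      = (psiC ((θ:ℂ) + (ε:ℂ) * Complex.I)).re - psiR θ + ε^2 * psiR'' θ / 2 := by
    rw [hps, hc0, psiC_ofReal hθ, hc1, deriv_psiC_real hθ, hysq]
    simp only [Complex.sub_re, Complex.add_re, Complex.mul_re, Complex.ofReal_re,
      Complex.ofReal_im, Complex.neg_re, Complex.neg_im, Complex.I_re, Complex.I_im, hc2re, hy]
    ring
  calc |(psiC ((θ:ℂ) + (ε:ℂ) * Complex.I)).re - psiR θ + ε^2 * psiR'' θ / 2|
      = |(psiC ((θ:ℂ) + y) - p.partialSum 3 y).re| := by rw [hre]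
    _ ≤ ‖psiC ((θ:ℂ) + y) - p.partialSum 3 y‖ := Complex.abs_re_le_norm _
    _ ≤ c * |ε|^3 := hb

lemma intervalIntegrable_div_sqrt (F : ℝ → ℝ) (hF : Continuous F) :
    IntervalIntegrable (fun u => F u / Real.sqrt (1 - u^2)) volume 0 1 := by
  obtain ⟨C, hC⟩ := (isCompact_Icc (a:=(0:ℝ)) (b:=1)).exists_bound_of_continuousOn hF.continuousOn
  have hC0 : 0 ≤ C := le_trans (norm_nonneg (F 0)) (hC 0 (by constructor <;> norm_num))
  have hmaj : IntervalIntegrable (fun u : ℝ => C * (1 - u) ^ (-(1/2) : ℝ)) volume 0 1 := by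
    have h := (intervalIntegral.intervalIntegrable_rpow' (a:=(0:ℝ)) (b:=1) (r := -(1/2))
      (by norm_num)).comp_sub_left 1
    norm_num at h
    exact (h.const_mul C).symm
  have hmeas : AEStronglyMeasurable (fun u : ℝ => F u / Real.sqrt (1 - u^2))
      (volume.restrict (Set.uIoc (0:ℝ) 1)) := by
    have hsq : Continuous fun u : ℝ => Real.sqrt (1 - u^2) :=
      (continuous_const.sub (continuous_pow 2)).sqrt
    exact (hF.measurable.div hsq.measurable).aestronglyMeasurable
  refine hmaj.mono_fun hmeas ?_
  filter_upwards [ae_restrict_mem measurableSet_uIoc] with u hu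
  rw [uIoc_of_le (by norm_num : (0:ℝ) ≤ 1)] at hu
  have h0u : 0 < u := hu.1
  have hu1 : u ≤ 1 := hu.2
  have h1u : 0 ≤ 1 - u := by linarith
  have hrpow : (1 - u) ^ (-(1/2) : ℝ) = (Real.sqrt (1 - u))⁻¹ := by
    rw [Real.rpow_neg h1u, Real.sqrt_eq_rpow]
  have hRHS : ‖C * (1 - u) ^ (-(1/2) : ℝ)‖ = C * (1 - u) ^ (-(1/2) : ℝ) := by
    rw [Real.norm_eq_abs, abs_of_nonneg (by positivity)]
  rw [hRHS, Real.norm_eq_abs, abs_div, abs_of_nonneg (Real.sqrt_nonneg (1 - u^2)), hrpow]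
  have hFu : |F u| ≤ C := by
    have := hC u ⟨h0u.le, hu1⟩
    rwa [Real.norm_eq_abs] at this
  rcases eq_or_lt_of_le hu1 with h1 | h1
  · subst h1
    simp
  · have hsp : 0 < Real.sqrt (1 - u) := Real.sqrt_pos.2 (by linarith)
    have hle : Real.sqrt (1 - u) ≤ Real.sqrt (1 - u^2) :=
      Real.sqrt_le_sqrt (by nlinarith)
    calc |F u| / Real.sqrt (1 - u^2) ≤ C / Real.sqrt (1 - u) :=
          div_le_div₀ hC0 hFu hsp hle
      _ = C * (Real.sqrt (1 - u))⁻¹ := by rw [div_eq_mul_inv]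

lemma integral_div_sqrt_eq (F : ℝ → ℝ) (hF : Continuous F) :
    (∫ u in (0:ℝ)..1, F u / Real.sqrt (1 - u^2))
      = ∫ t in (0:ℝ)..(π/2), F (Real.sin t) := by
  have hπ2 : (0:ℝ) < π/2 := by positivity
  have hπ : (0:ℝ) ≤ π/2 := hπ2.le
  set g : ℝ → ℝ := fun u => F u / Real.sqrt (1 - u^2) with hg
  have hpt : ∀ x : ℝ, 0 ≤ x → x < π/2 → Real.cos x • g (Real.sin x) = F (Real.sin x) := by
    intro x hx0 hxlt
    have hcos : 0 < Real.cos x := Real.cos_pos_of_mem_Ioo ⟨by linarith [Real.pi_pos], hxlt⟩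
    have hsqrt : Real.sqrt (1 - Real.sin x ^ 2) = Real.cos x :=
      (Real.cos_eq_sqrt_one_sub_sin_sq (by linarith [Real.pi_pos]) (by linarith)).symm
    rw [hg]
    simp only [smul_eq_mul, hsqrt]
    rw [mul_comm, div_mul_cancel₀ _ hcos.ne']
  have hgc : ContinuousOn g (Real.sin '' (Ioo (min 0 (π/2)) (max 0 (π/2)))) := by
    have himg : Real.sin '' (Ioo (min 0 (π/2)) (max 0 (π/2))) ⊆ Ioo 0 1 := by
      rw [min_eq_left hπ, max_eq_right hπ]
      rintro v ⟨x, hx, rfl⟩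
      obtain ⟨hx1, hx2⟩ := hx
      have hlt : Real.sin x < Real.sin (π/2) :=
        Real.strictMonoOn_sin ⟨by linarith [Real.pi_pos], hx2.le⟩
          ⟨by linarith [Real.pi_pos], le_rfl⟩ hx2
      rw [Real.sin_pi_div_two] at hlt
      exact ⟨Real.sin_pos_of_pos_of_lt_pi hx1 (by linarith [Real.pi_pos]), hlt⟩
    refine ContinuousOn.mono ?_ himg
    refine ContinuousOn.div hF.continuousOn
      ((continuous_const.sub (continuous_pow 2)).sqrt.continuousOn) ?_
    intro x hx
    obtain ⟨hx1, hx2⟩ := hx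
    have h1 : 0 < 1 - x^2 := by nlinarith
    positivity
  have hg1 : IntegrableOn g (Real.sin '' (Set.uIcc (0:ℝ) (π/2))) := by
    have himg : Real.sin '' (Set.uIcc (0:ℝ) (π/2)) ⊆ Icc 0 1 := by
      rw [uIcc_of_le hπ]
      rintro v ⟨x, hx, rfl⟩
      obtain ⟨hx1, hx2⟩ := hx
      exact ⟨Real.sin_nonneg_of_nonneg_of_le_pi hx1 (by linarith [Real.pi_pos, hx2]),
        Real.sin_le_one _⟩
    refine IntegrableOn.mono_set ?_ himg
    rw [integrableOn_Icc_iff_integrableOn_Ioc]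
    exact (intervalIntegrable_iff_integrableOn_Ioc_of_le (by norm_num)).1
      (intervalIntegrable_div_sqrt F hF)
  have hne : ∀ᵐ (x : ℝ), x ≠ π/2 := by
    rw [MeasureTheory.ae_iff]
    simp only [ne_eq, not_not, setOf_eq_eq_singleton]
    exact measure_singleton _
  have hg2 : IntegrableOn (fun x => Real.cos x • (g ∘ Real.sin) x) (Set.uIcc (0:ℝ) (π/2)) := by
    have hint : IntegrableOn (fun x => F (Real.sin x)) (Set.uIcc (0:ℝ) (π/2)) := by
      exact ((hF.comp Real.continuous_sin).integrableOn_Icc).mono_set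
        (by rw [uIcc_of_le hπ])
    refine hint.congr ?_
    filter_upwards [ae_restrict_mem measurableSet_uIcc, ae_restrict_of_ae hne] with x hx hxne
    rw [uIcc_of_le hπ] at hx
    exact (hpt x hx.1 (lt_of_le_of_ne hx.2 hxne)).symm
  have hsub : (∫ x in (0:ℝ)..(π/2), Real.cos x • g (Real.sin x))
      = ∫ u in (Real.sin 0)..(Real.sin (π/2)), g u :=
    intervalIntegral.integral_comp_smul_deriv''' Real.continuous_sin.continuousOn
      (fun x hx => (Real.hasDerivAt_sin x).hasDerivWithinAt) hgc hg1 hg2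
  have hcongr : (∫ x in (0:ℝ)..(π/2), Real.cos x • g (Real.sin x))
      = ∫ t in (0:ℝ)..(π/2), F (Real.sin t) := by
    apply intervalIntegral.integral_congr_ae
    filter_upwards [hne] with x hxne hmem
    rw [uIoc_of_le hπ] at hmem
    exact hpt x hmem.1.le (lt_of_le_of_ne hmem.2 hxne)
  rw [← hcongr, hsub, Real.sin_zero, Real.sin_pi_div_two]

end Stmt17Aux

open scoped Real

/-- For `θ > 0`, `s ∈ ℝ` and
`H(b) = ∫₀¹ (θ·Re ψ(θ + i u θ b/2) + s)/√(1−u²) du`, one has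
`(H(b) − (π/2)(s + θψ(θ)))/b² → −(π/32)θ³ψ″(θ)` as `b → 0⁺`. -/
theorem statement17 (θ : ℝ) (hθ : 0 < θ) (s : ℝ) (H : ℝ → ℝ)
    (hH : ∀ b : ℝ, H b =
      ∫ u in (0:ℝ)..1,
        (θ * (psiC ((θ : ℂ) + Complex.I * (u : ℂ) * (θ : ℂ) * (b : ℂ) / 2)).re + s)
          / Real.sqrt (1 - u ^ 2)) :
    Filter.Tendsto
      (fun b : ℝ => (H b - Real.pi / 2 * (s + θ * psiR θ)) / b ^ 2)
      (nhdsWithin 0 (Set.Ioi (0 : ℝ)))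
      (nhds (-(Real.pi / 32) * θ ^ 3 * psiR'' θ)) := by
  obtain ⟨δ, hδ, C, hTay⟩ := Stmt17Aux.taylor θ hθ
  have hπpos : 0 < π := Real.pi_pos
  set φ : ℝ → ℝ := fun ε => (psiC ((θ:ℂ) + (ε:ℂ) * Complex.I)).re with hφdef
  have hφcont : Continuous φ := by
    rw [continuous_iff_continuousAt]
    intro ε
    have hmem : ((θ:ℂ) + (ε:ℂ) * Complex.I) ∈ {z : ℂ | 0 < z.re} := by
      simp only [mem_setOf_eq, Complex.add_re, Complex.ofReal_re, Complex.mul_re,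
        Complex.ofReal_im, Complex.I_re, Complex.I_im]
      simpa using hθ
    have h1 : ContinuousAt psiC ((θ:ℂ) + (ε:ℂ) * Complex.I) :=
      (Stmt17Aux.psiC_analyticOnNhd _ hmem).differentiableAt.continuousAt
    have h2 : ContinuousAt (fun ε : ℝ => (θ:ℂ) + (ε:ℂ) * Complex.I) ε :=
      (continuous_const.add (Complex.continuous_ofReal.mul continuous_const)).continuousAt
    have h12 : ContinuousAt (fun ε : ℝ => psiC ((θ:ℂ) + (ε:ℂ) * Complex.I)) ε :=
      ContinuousAt.comp (f := fun ε : ℝ => (θ:ℂ) + (ε:ℂ) * Complex.I) h1 h2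
    exact Complex.continuous_re.continuousAt.comp h12
  set R : ℝ → ℝ := fun ε => φ ε - psiR θ + ε^2 * psiR'' θ / 2 with hRdef
  have hRcont : Continuous R :=
    (hφcont.sub continuous_const).add (((continuous_pow 2).mul continuous_const).div_const 2)
  have hRbound : ∀ ε : ℝ, |ε| ≤ δ → |R ε| ≤ C * |ε|^3 := hTay
  -- rewrite H via the sine substitution
  have key : ∀ b : ℝ, H b = ∫ t in (0:ℝ)..(π/2), (θ * φ (Real.sin t * (θ*b/2)) + s) := by
    intro b
    rw [hH b]
    have hFc : Continuous fun u : ℝ => θ * φ (u * (θ*b/2)) + s :=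
      (continuous_const.mul (hφcont.comp (continuous_id.mul continuous_const))).add
        continuous_const
    have hsub := Stmt17Aux.integral_div_sqrt_eq (fun u => θ * φ (u * (θ*b/2)) + s) hFc
    rw [← hsub]
    apply intervalIntegral.integral_congr
    intro u hu
    have harg : (θ : ℂ) + Complex.I * (u : ℂ) * (θ : ℂ) * (b : ℂ) / 2
        = (θ:ℂ) + ((u * (θ*b/2) : ℝ):ℂ) * Complex.I := by push_cast; ring
    simp only [harg, hφdef]
  have hsin2 : (∫ t in (0:ℝ)..(π/2), Real.sin t ^ 2) = π/4 := by
    rw [integral_sin_sq, Real.cos_pi_div_two]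
    norm_num
    ring
  -- algebraic split
  have hsplit : ∀ b : ℝ,
      H b - π / 2 * (s + θ * psiR θ) - (-(π / 32) * θ ^ 3 * psiR'' θ) * b ^ 2
        = θ * ∫ t in (0:ℝ)..(π/2), R (Real.sin t * (θ*b/2)) := by
    intro b
    have i1 : IntervalIntegrable (fun t => θ * R (Real.sin t * (θ*b/2))) volume 0 (π/2) :=
      (continuous_const.mul
        (hRcont.comp (Real.continuous_sin.mul continuous_const))).intervalIntegrable _ _
    have i2 : IntervalIntegrable
        (fun t => Real.sin t ^ 2 * (-(θ * (θ*b/2)^2 * psiR'' θ / 2))) volume 0 (π/2) :=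
      ((Real.continuous_sin.pow 2).mul continuous_const).intervalIntegrable _ _
    have i3 : IntervalIntegrable (fun _ : ℝ => θ * psiR θ + s) volume 0 (π/2) :=
      intervalIntegrable_const
    have hfun : (fun t => θ * φ (Real.sin t * (θ*b/2)) + s)
        = fun t => θ * R (Real.sin t * (θ*b/2)) +
            ((Real.sin t ^ 2 * (-(θ * (θ*b/2)^2 * psiR'' θ / 2))) + (θ * psiR θ + s)) := by
      funext t
      simp only [hRdef]
      ring
    rw [key b, hfun, intervalIntegral.integral_add i1 (i2.add i3),
      intervalIntegral.integral_add i2 i3, intervalIntegral.integral_const,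
      intervalIntegral.integral_mul_const, hsin2, intervalIntegral.integral_const_mul,
      smul_eq_mul]
    ring
  -- the error term tends to zero
  have hK : Filter.Tendsto
      (fun b : ℝ => (θ * ∫ t in (0:ℝ)..(π/2), R (Real.sin t * (θ*b/2))) / b^2)
      (nhdsWithin 0 (Set.Ioi (0:ℝ))) (nhds 0) := by
    set K : ℝ := θ * (|C| * (θ/2)^3 * (π/2)) with hKdef
    apply squeeze_zero_norm' (a := fun b : ℝ => K * b)
    · have hmem : Set.Ioo (0:ℝ) (2*δ/θ) ∈ nhdsWithin 0 (Set.Ioi (0:ℝ)) :=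
        Ioo_mem_nhdsGT (by positivity)
      filter_upwards [hmem] with b hb
      obtain ⟨hb0, hblt⟩ := hb
      have hkpos : 0 < θ*b/2 := by positivity
      have hbθ : b * θ < 2*δ := (lt_div_iff₀ hθ).1 hblt
      have hkδ : θ*b/2 ≤ δ := by nlinarith
      have hint : ‖∫ t in (0:ℝ)..(π/2), R (Real.sin t * (θ*b/2))‖
          ≤ (|C| * (θ*b/2)^3) * |π/2 - 0| := by
        apply intervalIntegral.norm_integral_le_of_norm_le_const
        intro x _
        have hεle : |Real.sin x * (θ*b/2)| ≤ θ*b/2 := by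
          rw [abs_mul, abs_of_pos hkpos]
          calc |Real.sin x| * (θ*b/2) ≤ 1 * (θ*b/2) :=
                mul_le_mul_of_nonneg_right (Real.abs_sin_le_one x) hkpos.le
            _ = θ*b/2 := one_mul _
        have h1 := hRbound _ (le_trans hεle hkδ)
        have h2 : |Real.sin x * (θ*b/2)|^3 ≤ (θ*b/2)^3 :=
          pow_le_pow_left₀ (abs_nonneg _) hεle 3
        calc ‖R (Real.sin x * (θ*b/2))‖ = |R (Real.sin x * (θ*b/2))| := rfl
          _ ≤ C * |Real.sin x * (θ*b/2)|^3 := h1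
          _ ≤ |C| * |Real.sin x * (θ*b/2)|^3 :=
              mul_le_mul_of_nonneg_right (le_abs_self C) (by positivity)
          _ ≤ |C| * (θ*b/2)^3 := mul_le_mul_of_nonneg_left h2 (abs_nonneg C)
      rw [Real.norm_eq_abs, abs_div, abs_mul, abs_of_pos hθ,
        abs_of_pos (by positivity : (0:ℝ) < b^2), div_le_iff₀ (by positivity : (0:ℝ) < b^2)]
      rw [sub_zero, abs_of_nonneg (by positivity : (0:ℝ) ≤ π/2)] at hint
      calc θ * |∫ t in (0:ℝ)..(π/2), R (Real.sin t * (θ*b/2))|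
          ≤ θ * ((|C| * (θ*b/2)^3) * (π/2)) :=
            mul_le_mul_of_nonneg_left hint hθ.le
        _ = K * b * b^2 := by rw [hKdef]; ring
    · have h0 : Filter.Tendsto (fun b : ℝ => K * b) (nhds 0) (nhds (K * 0)) :=
        (continuous_const.mul continuous_id).tendsto 0
      rw [mul_zero] at h0
      exact h0.mono_left nhdsWithin_le_nhds
  -- conclude
  have hfinal : Filter.Tendsto
      (fun b : ℝ => -(π / 32) * θ ^ 3 * psiR'' θ
        + (θ * ∫ t in (0:ℝ)..(π/2), R (Real.sin t * (θ*b/2))) / b^2)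
      (nhdsWithin 0 (Set.Ioi (0:ℝ))) (nhds (-(π / 32) * θ ^ 3 * psiR'' θ + 0)) :=
    tendsto_const_nhds.add hK
  rw [add_zero] at hfinal
  apply Filter.Tendsto.congr' ?_ hfinal
  filter_upwards [self_mem_nhdsWithin] with b hb
  have hb0 : (0:ℝ) < b := hb
  have h2 := hsplit b
  have h3 : H b - π / 2 * (s + θ * psiR θ)
      = (-(π / 32) * θ ^ 3 * psiR'' θ) * b ^ 2
        + θ * ∫ t in (0:ℝ)..(π/2), R (Real.sin t * (θ*b/2)) := by linarith
  rw [h3, add_div, mul_div_cancel_right₀ _ (by positivity : b^2 ≠ 0)]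
end
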